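/- arXiv:2506.09723 — 2 statements merged into one kernel-verified Lean document; each statement's English description precedes it below -/
import Mathlib

section
/- Let A = {(diag(a, 1/a), 0) : a > 0} ⊆ G and set x_n = (I, (0, n)) ∈ G for n ∈ ℕ. Then the conjugates x_n A x_n⁻¹ converge in the Chabauty sense to the closed subgroup V_∞ = {(I, (0, t)) : t ∈ ℝ}. -/
open Filter Topology

noncomputable section

/-- `SL(2,ℝ)`. -/
abbrev SL2 := Matrix.SpecialLinearGroup (Fin 2) ℝ

/-- The topology on `SL(2,ℝ)` induced from the space of `2×2` real matrices. -/
instance : TopologicalSpace SL2 :=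
  TopologicalSpace.induced ((↑) : SL2 → Matrix (Fin 2) (Fin 2) ℝ) inferInstance

/-- The underlying type of the group `G = SL(2,ℝ) ⋉ ℝ²`, with the product topology. -/
abbrev GG := SL2 × (Fin 2 → ℝ)

/-- Multiplication in `G`: `(g,v)(g',v') = (gg', v + g·v')`. -/
def gmul (x y : GG) : GG := (x.1 * y.1, x.2 + (x.1 : Matrix (Fin 2) (Fin 2) ℝ).mulVec y.2)

/-- The identity element of `G`. -/
def gone : GG := (1, 0)

/-- Inversion in `G`. -/
def ginv (x : GG) : GG := (x.1⁻¹, -((x.1⁻¹ : SL2) : Matrix (Fin 2) (Fin 2) ℝ).mulVec x.2)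

/-- The conjugate `x H x⁻¹` of a subset `H ⊆ G` by `x ∈ G`. -/
def conjSet (x : GG) (H : Set GG) : Set GG := (fun h => gmul (gmul x h) (ginv x)) '' H

/-- `H` is a closed subgroup of `G`. -/
def IsClosedSubgroup (H : Set GG) : Prop :=
  IsClosed H ∧ gone ∈ H ∧ (∀ a ∈ H, ∀ b ∈ H, gmul a b ∈ H) ∧ (∀ a ∈ H, ginv a ∈ H)

/-- Chabauty convergence of a sequence of subsets of a topological space:
(i) every point of the limit is a limit of a sequence of points of the `S n`;
(ii) every limit of a subsequence of points of the `S n` lies in the limit set. -/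
def ChabautyTendsto {X : Type*} [TopologicalSpace X] (S : ℕ → Set X) (T : Set X) : Prop :=
  (∀ h ∈ T, ∃ u : ℕ → X, (∀ n, u n ∈ S n) ∧ Tendsto u atTop (𝓝 h)) ∧
  (∀ k : ℕ → ℕ, StrictMono k → ∀ u : ℕ → X, (∀ n, u n ∈ S (k n)) →
    ∀ x : X, Tendsto u atTop (𝓝 x) → x ∈ T)

/-- The Levi subgroup `L = SL(2,ℝ) × {0}`. -/
def Lset : Set GG := {x | x.2 = 0}

/-- The subgroup `N⁺ ⋉ ℝ² = {((1,s;0,1), v) : s ∈ ℝ, v ∈ ℝ²}`. -/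
def NplusR2 : Set GG := {x | ∃ s : ℝ, (x.1 : Matrix (Fin 2) (Fin 2) ℝ) = !![1, s; 0, 1]}

/-- The maximal compact subgroup `K = SO(2,ℝ) × {0}`. -/
def Kset : Set GG :=
  {x | ∃ θ : ℝ, (x.1 : Matrix (Fin 2) (Fin 2) ℝ) =
      !![Real.cos θ, Real.sin θ; -Real.sin θ, Real.cos θ] ∧ x.2 = 0}

/-- `V_c = {(I,(t,ct)) : t ∈ ℝ}`. -/
def Vc (c : ℝ) : Set GG := {x | ∃ t : ℝ, x.1 = 1 ∧ x.2 = ![t, c * t]}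

/-- `V_∞ = {(I,(0,t)) : t ∈ ℝ}`. -/
def Vinf : Set GG := {x | ∃ t : ℝ, x.1 = 1 ∧ x.2 = ![0, t]}

/-- `Ñ⁺ = {(±(1,s;0,1), 0) : s ∈ ℝ}`. -/
def Ntilde : Set GG :=
  {x | (∃ s : ℝ, (x.1 : Matrix (Fin 2) (Fin 2) ℝ) = !![1, s; 0, 1] ∨
      (x.1 : Matrix (Fin 2) (Fin 2) ℝ) = -!![1, s; 0, 1]) ∧ x.2 = 0}

/-- The diagonal subgroup `A = {(diag(a,1/a), 0) : a > 0}`. -/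
def Aset : Set GG :=
  {x | ∃ a : ℝ, 0 < a ∧ (x.1 : Matrix (Fin 2) (Fin 2) ℝ) = !![a, 0; 0, a⁻¹] ∧ x.2 = 0}

/-- `V_{(a,b,c)} = {((1,at;0,1), (ct + abt²/2, bt)) : t ∈ ℝ}`. -/
def Vabc (a b c : ℝ) : Set GG :=
  {x | ∃ t : ℝ, (x.1 : Matrix (Fin 2) (Fin 2) ℝ) = !![1, a * t; 0, 1] ∧
      x.2 = ![c * t + a * b * t ^ 2 / 2, b * t]}

/-- The upper triangular Borel subgroup `B` of `SL(2,ℝ)`, inside `G`. -/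
def Bset : Set GG :=
  {x | ∃ a s : ℝ, a ≠ 0 ∧ (x.1 : Matrix (Fin 2) (Fin 2) ℝ) = !![a, s; 0, a⁻¹] ∧ x.2 = 0}

/-- `W = {((1,s;0,1), (t,0)) : s, t ∈ ℝ} = N⁺ ⋉ {(t,0)}`. -/
def Wset : Set GG :=
  {x | ∃ s t : ℝ, (x.1 : Matrix (Fin 2) (Fin 2) ℝ) = !![1, s; 0, 1] ∧ x.2 = ![t, 0]}

/-- The Borel subgroup `P = B ⋉ ℝ²` of `G`. -/
def Pset : Set GG :=
  {x | ∃ a s : ℝ, a ≠ 0 ∧ (x.1 : Matrix (Fin 2) (Fin 2) ℝ) = !![a, s; 0, a⁻¹]}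

/-- The translation subgroup `ℝ² = {(I,v) : v ∈ ℝ²}`. -/
def R2set : Set GG := {x | x.1 = 1}

/-- The unipotent subgroup `N⁺ = {((1,s;0,1), 0) : s ∈ ℝ}`. -/
def Nplus : Set GG := {x | ∃ s : ℝ, (x.1 : Matrix (Fin 2) (Fin 2) ℝ) = !![1, s; 0, 1] ∧ x.2 = 0}

/-- `V₀ = {(I,(t,0)) : t ∈ ℝ}`. -/
def V0 : Set GG := {x | ∃ t : ℝ, x.1 = 1 ∧ x.2 = ![t, 0]}


noncomputable def diagEl (a : ℝ) (h : a ≠ 0) : SL2 :=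
  ⟨!![a, 0; 0, a⁻¹], by simp [Matrix.det_fin_two_of, mul_inv_cancel₀ h]⟩

lemma mem_conj_of (n : ℕ) (a : ℝ) (ha : 0 < a) :
    (diagEl a ha.ne', ![(0:ℝ), n * (1 - a⁻¹)]) ∈
      conjSet ((1 : SL2), ![0, (n : ℝ)]) Aset := by
  refine ⟨(diagEl a ha.ne', 0), ⟨a, ha, rfl, rfl⟩, ?_⟩
  simp only [gmul, ginv, one_mul, mul_one, inv_one]
  refine Prod.ext rfl (funext fun i => ?_)
  fin_cases i <;>
    (simp [Matrix.mulVec, dotProduct, diagEl]; try ring)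

lemma conj_mem_of (n : ℕ) (y : GG) (hy : y ∈ conjSet ((1 : SL2), ![0, (n : ℝ)]) Aset) :
    ∃ a : ℝ, 0 < a ∧ (y.1 : Matrix (Fin 2) (Fin 2) ℝ) = !![a, 0; 0, a⁻¹] ∧
      y.2 = ![0, n * (1 - a⁻¹)] := by
  obtain ⟨h, ⟨a, ha, h1, h2⟩, rfl⟩ := hy
  refine ⟨a, ha, ?_, ?_⟩
  · simp [gmul, ginv, h1]
  · simp only [gmul, ginv, one_mul, mul_one, inv_one, h1, h2]
    funext i
    fin_cases i <;>
      (simp [Matrix.mulVec, dotProduct, h1]; try ring)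

lemma coe_continuous : Continuous ((↑) : SL2 → Matrix (Fin 2) (Fin 2) ℝ) :=
  continuous_induced_dom

lemma tendsto_SL2_iff {u : ℕ → SL2} {x : SL2} :
    Tendsto u atTop (𝓝 x) ↔
      Tendsto (fun n => ((u n : Matrix (Fin 2) (Fin 2) ℝ))) atTop (𝓝 (x : Matrix (Fin 2) (Fin 2) ℝ)) := by
  rw [nhds_induced, tendsto_comap_iff]
  rfl

def upperUnipotent (s : ℝ) : SL2 :=
  ⟨!![1, s; 0, 1], by simp [Matrix.det_fin_two_of]⟩

/-- With `x_n = (I,(0,n))`, the conjugates `x_n A x_n⁻¹` converge in the Chabauty sense to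
the closed subgroup `V_∞`. -/
theorem stmt_16 :
    ChabautyTendsto (fun n => conjSet ((1 : SL2), ![0, (n : ℝ)]) Aset) Vinf ∧
      IsClosedSubgroup Vinf := by
  constructor
  · constructor
    · -- part (i)
      rintro h ⟨t, h1, h2⟩
      set aseq : ℕ → ℝ := fun n => if h : 0 < (n : ℝ) ∧ t < n then n / (n - t) else 1 with haseq
      have hapos : ∀ n, 0 < aseq n := by
        intro n
        by_cases hn : 0 < (n : ℝ) ∧ t < n
        · simp only [haseq, dif_pos hn]
          exact div_pos hn.1 (by linarith [hn.2])
        · simp only [haseq, dif_neg hn]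
          exact one_pos
      refine ⟨fun n => (diagEl (aseq n) (hapos n).ne', ![0, n * (1 - (aseq n)⁻¹)]),
        fun n => mem_conj_of n _ (hapos n), ?_⟩
      have hev : ∀ᶠ n : ℕ in atTop, aseq n = (1 - t / n)⁻¹ ∧ (n : ℝ) * (1 - (aseq n)⁻¹) = t := by
        filter_upwards [eventually_gt_atTop ⌈|t|⌉₊, eventually_gt_atTop 0] with n hn hn0
        have hnt : t < (n : ℝ) := by
          have h1 : ((⌈|t|⌉₊ : ℕ) : ℝ) < n := by exact_mod_cast hn
          linarith [Nat.le_ceil |t|, le_abs_self t]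
        have hn0' : (0 : ℝ) < n := by exact_mod_cast hn0
        have hcond : 0 < (n : ℝ) ∧ t < n := ⟨hn0', hnt⟩
        have h1 : aseq n = n / (n - t) := by
          simp only [haseq]
          rw [dif_pos hcond]
        have hne : (n : ℝ) - t ≠ 0 := by linarith
        constructor
        · rw [h1]
          field_simp
        · rw [h1]
          have : ((n : ℝ) / (n - t))⁻¹ = (n - t) / n := by
            rw [inv_div]
          rw [this]
          field_simp
          ring
      have hase : Tendsto aseq atTop (𝓝 1) := by
        have h0 : Tendsto (fun n : ℕ => 1 - t / n) atTop (𝓝 1) := by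
          have := tendsto_const_div_atTop_nhds_zero_nat t
          simpa using (tendsto_const_nhds (x := (1:ℝ))).sub this
        have hinv : Tendsto (fun n : ℕ => (1 - t / n)⁻¹) atTop (𝓝 1) := by
          simpa using h0.inv₀ one_ne_zero
        refine hinv.congr' ?_
        filter_upwards [hev] with n hn using hn.1.symm
      rw [show h = ((1 : SL2), ![0, t]) from Prod.ext h1 h2]
      refine Tendsto.prodMk_nhds ?_ ?_
      · rw [tendsto_SL2_iff]
        have hcoe : ((1 : SL2) : Matrix (Fin 2) (Fin 2) ℝ) = !![1, 0; 0, 1] := by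
          ext i j
          fin_cases i <;> fin_cases j <;> simp
        rw [hcoe]
        have : Tendsto (fun a : ℝ => (!![a, 0; 0, a⁻¹] : Matrix (Fin 2) (Fin 2) ℝ))
            (𝓝 1) (𝓝 !![1, 0; 0, 1]) := by
          refine tendsto_pi_nhds.2 fun i => ?_
          rw [tendsto_pi_nhds]
          intro j
          fin_cases i <;> fin_cases j <;> simp
          · exact tendsto_id
          · simpa using (tendsto_id (x := 𝓝 (1:ℝ))).inv₀ one_ne_zero
        exact this.comp hase
      · rw [tendsto_pi_nhds]
        intro i
        fin_cases i
        · simp [tendsto_const_nhds]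
        · refine Tendsto.congr' ?_ tendsto_const_nhds
          filter_upwards [hev] with n hn
          simpa using hn.2.symm
    · -- part (ii)
      intro k hk u hu x hx
      choose a hapos hmat hvec using fun n => conj_mem_of (k n) (u n) (hu n)
      have hx1 : Tendsto (fun n => (u n).1) atTop (𝓝 x.1) :=
        (continuous_fst.tendsto x).comp hx
      have hx2 : Tendsto (fun n => (u n).2) atTop (𝓝 x.2) :=
        (continuous_snd.tendsto x).comp hx
      have hx2' := tendsto_pi_nhds.1 hx2
      -- second coordinate entry 1 converges
      have hv1 : Tendsto (fun n => (k n : ℝ) * (1 - (a n)⁻¹)) atTop (𝓝 (x.2 1)) := by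
        refine (hx2' 1).congr fun n => ?_
        rw [hvec n]; simp
      have hv0 : x.2 0 = 0 := by
        have h0 : Tendsto (fun n => (u n).2 0) atTop (𝓝 (0:ℝ)) := by
          refine tendsto_const_nhds.congr fun n => ?_
          rw [hvec n]; simp
        exact tendsto_nhds_unique (hx2' 0) h0
      -- k n → ∞
      have hkinf : Tendsto (fun n => (k n : ℝ)) atTop atTop :=
        tendsto_natCast_atTop_atTop.comp hk.tendsto_atTop
      have hone : Tendsto (fun n => 1 - (a n)⁻¹) atTop (𝓝 0) := by
        have := hv1.div_atTop hkinf
        refine this.congr' ?_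
        filter_upwards [hkinf.eventually_gt_atTop 0] with n hn
        field_simp
      have hainv : Tendsto (fun n => (a n)⁻¹) atTop (𝓝 1) := by
        have := (tendsto_const_nhds (x := (1:ℝ))).sub hone
        simpa using this
      have ha1 : Tendsto a atTop (𝓝 1) := by
        have := hainv.inv₀ one_ne_zero
        simp only [inv_inv, inv_one] at this
        exact this
      -- first coordinate
      have hmatt : Tendsto (fun n => ((u n).1 : Matrix (Fin 2) (Fin 2) ℝ)) atTop
          (𝓝 (x.1 : Matrix (Fin 2) (Fin 2) ℝ)) := tendsto_SL2_iff.1 hx1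
      have hmatt' := fun (i j : Fin 2) => tendsto_pi_nhds.1 (tendsto_pi_nhds.1 hmatt i) j
      have hxm : (x.1 : Matrix (Fin 2) (Fin 2) ℝ) = !![1, 0; 0, 1] := by
        ext i j
        fin_cases i <;> fin_cases j
        · exact tendsto_nhds_unique ((hmatt' 0 0).congr (fun n => by rw [hmat n]; try simp))
            (by simpa using ha1)
        · exact tendsto_nhds_unique ((hmatt' 0 1).congr (fun n => by rw [hmat n]; try simp))
            (by simpa using tendsto_const_nhds (x := (0:ℝ)))
        · exact tendsto_nhds_unique ((hmatt' 1 0).congr (fun n => by rw [hmat n]; try simp))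
            (by simpa using tendsto_const_nhds (x := (0:ℝ)))
        · exact tendsto_nhds_unique ((hmatt' 1 1).congr (fun n => by rw [hmat n]; try simp))
            (by simpa using hainv)
      refine ⟨x.2 1, ?_, ?_⟩
      · ext i j
        rw [hxm]
        fin_cases i <;> fin_cases j <;> simp
      · funext i
        fin_cases i
        · simpa using hv0
        · simp
  · -- closed subgroup
    refine ⟨?_, ⟨0, rfl, by funext i; fin_cases i <;> simp [gone]⟩, ?_, ?_⟩
    · have : Vinf = (fun x : GG => ((x.1 : Matrix (Fin 2) (Fin 2) ℝ), x.2 0)) ⁻¹'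
          ({(1 : Matrix (Fin 2) (Fin 2) ℝ)} ×ˢ {(0:ℝ)}) := by
        ext x
        simp only [Vinf, Set.mem_setOf_eq, Set.mem_preimage, Set.mem_prod, Set.mem_singleton_iff]
        constructor
        · rintro ⟨t, h1, h2⟩
          refine ⟨by rw [h1]; rfl, by rw [h2]; simp⟩
        · rintro ⟨h1, h2⟩
          refine ⟨x.2 1, Subtype.ext h1, funext fun i => ?_⟩
          fin_cases i <;> simp [h2]
      rw [this]
      refine IsClosed.preimage ?_ (IsClosed.prod isClosed_singleton isClosed_singleton)
      exact (coe_continuous.comp continuous_fst).prodMk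
        ((continuous_apply 0).comp continuous_snd)
    · rintro p ⟨s, hp1, hp2⟩ q ⟨t, hq1, hq2⟩
      refine ⟨s + t, ?_, ?_⟩
      · simp [gmul, hp1, hq1]
      · simp only [gmul, hp1, hp2, hq1, hq2]
        funext i
        fin_cases i <;> simp [Matrix.mulVec, dotProduct]
    · rintro p ⟨s, hp1, hp2⟩
      refine ⟨-s, ?_, ?_⟩
      · simp [ginv, hp1]
      · simp only [ginv, hp1, hp2, inv_one]
        funext i
        fin_cases i <;> simp [Matrix.mulVec, dotProduct]

end
end

section
/- Let B = {((a, s; 0, 1/a), 0) : a ∈ ℝ, a ≠ 0, s ∈ ℝ} ⊆ G be the group of upper triangular matrices in SL(2,ℝ), and set x_n = (I, (0, n)) ∈ G for n ∈ ℕ. Then the conjugates x_n B x_n⁻¹ converge in the Chabauty sense to the closed subgroup ℝ² = {(I, v) : v ∈ ℝ²}. -/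
open Filter Topology

noncomputable section

lemma conj_formula (v : Fin 2 → ℝ) (h : GG) :
    gmul (gmul ((1:SL2), v) h) (ginv ((1:SL2), v)) =
      (h.1, v + h.2 - (h.1 : Matrix (Fin 2) (Fin 2) ℝ).mulVec v) := by
  simp [gmul, ginv, Matrix.mulVec_neg, sub_eq_add_neg, add_assoc]

def bor (a b s : ℝ) (hab : a * b = 1) : SL2 :=
  ⟨!![a, s; 0, b], by simp [Matrix.det_fin_two_of, hab]⟩

lemma bor_mem (a b s : ℝ) (hab : a * b = 1) : ((bor a b s hab, 0) : GG) ∈ Bset := by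
  have ha : a ≠ 0 := left_ne_zero_of_mul_eq_one hab
  have hb : b = a⁻¹ := eq_inv_of_mul_eq_one_right hab
  exact ⟨a, s, ha, by simp [bor, hb], rfl⟩

lemma gone_mem : gone ∈ Bset :=
  ⟨1, 0, one_ne_zero, by simp [gone, Matrix.one_fin_two], rfl⟩

lemma tendsto_SL2 {f : ℕ → SL2} {g : SL2} :
    Tendsto f atTop (𝓝 g) ↔
      Tendsto (fun n => (f n : Matrix (Fin 2) (Fin 2) ℝ)) atTop (𝓝 (g : Matrix (Fin 2) (Fin 2) ℝ)) := by
  rw [nhds_induced, tendsto_comap_iff]; rfl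

lemma coe_cont : Continuous (fun x : GG => (x.1 : Matrix (Fin 2) (Fin 2) ℝ)) :=
  continuous_induced_dom.comp continuous_fst

lemma R2_closed_subgroup : IsClosedSubgroup R2set := by
  refine ⟨?_, rfl, ?_, ?_⟩
  · have : R2set = (fun x : GG => (x.1 : Matrix (Fin 2) (Fin 2) ℝ)) ⁻¹' {1} := by
      ext x
      simp only [R2set, Set.mem_setOf_eq, Set.mem_preimage, Set.mem_singleton_iff]
      constructor
      · rintro h; rw [h]; simp
      · intro h; ext i j <;> simp_all
    rw [this]
    exact isClosed_singleton.preimage coe_cont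
  · rintro a ha b hb
    simp only [R2set, Set.mem_setOf_eq] at *
    simp [gmul, ha, hb]
  · rintro a ha
    simp only [R2set, Set.mem_setOf_eq] at *
    simp [ginv, ha]
lemma part1 (h : GG) (h1 : h.1 = 1) :
    ∃ u : ℕ → GG, (∀ n : ℕ, u n ∈ conjSet ((1:SL2), ![0,(n:ℝ)]) Bset) ∧ Tendsto u atTop (𝓝 h) := by
  set p := h.2 0 with hp
  set q := h.2 1 with hq
  obtain ⟨N, hN⟩ := exists_nat_gt |q|
  have key : ∀ n : ℕ, N ≤ n → ((1 - q/(n:ℝ)) ≠ 0 ∧ (0:ℝ) < n) := by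
    intro n hn
    have hn' : |q| < (n:ℝ) := lt_of_lt_of_le hN (by exact_mod_cast hn)
    have hq1 : q < n := lt_of_le_of_lt (le_abs_self q) hn'
    have hnpos : (0:ℝ) < n := lt_of_le_of_lt (abs_nonneg q) hn'
    have : q/n < 1 := (div_lt_one hnpos).2 hq1
    exact ⟨by linarith, hnpos⟩
  set u : ℕ → GG := fun n => if hn : N ≤ n then
      gmul (gmul ((1:SL2), ![0,(n:ℝ)])
        ((bor ((1 - q/(n:ℝ))⁻¹) (1 - q/(n:ℝ)) (-p/(n:ℝ)) (inv_mul_cancel₀ (key n hn).1)), 0))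
        (ginv ((1:SL2), ![0,(n:ℝ)]))
    else gmul (gmul ((1:SL2), ![0,(n:ℝ)]) gone) (ginv ((1:SL2), ![0,(n:ℝ)])) with hu
  refine ⟨u, fun n => ?_, ?_⟩
  · rw [hu]
    dsimp only
    split_ifs with hn
    · exact ⟨_, bor_mem _ _ _ _, rfl⟩
    · exact ⟨_, gone_mem, rfl⟩
  · -- limits
    have hmat : ∀ n : ℕ, N ≤ n →
        ((u n).1 : Matrix (Fin 2) (Fin 2) ℝ) = !![(1 - q/(n:ℝ))⁻¹, -p/(n:ℝ); 0, 1 - q/(n:ℝ)] := by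
      intro n hn
      rw [hu]
      dsimp only
      rw [dif_pos hn, conj_formula]
      rfl
    have hvec : ∀ n : ℕ, N ≤ n → (u n).2 = h.2 := by
      intro n hn
      have hn0 : ((n:ℝ)) ≠ 0 := ne_of_gt (key n hn).2
      rw [hu]
      dsimp only
      rw [dif_pos hn, conj_formula]
      funext i
      fin_cases i
      · simp [bor, Matrix.mulVec, dotProduct, Fin.sum_univ_two]
        field_simp
        exact hp
      · simp [bor, Matrix.mulVec, dotProduct, Fin.sum_univ_two]
        field_simp
        rw [← hq]; ring
    have hq0 : Tendsto (fun n : ℕ => q/(n:ℝ)) atTop (𝓝 0) :=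
      tendsto_const_div_atTop_nhds_zero_nat q
    have hp0 : Tendsto (fun n : ℕ => -p/(n:ℝ)) atTop (𝓝 0) := by
      simpa using tendsto_const_div_atTop_nhds_zero_nat (-p)
    have hb1 : Tendsto (fun n : ℕ => 1 - q/(n:ℝ)) atTop (𝓝 1) := by
      simpa using tendsto_const_nhds.sub hq0
    have hfst : Tendsto (fun n => (u n).1) atTop (𝓝 h.1) := by
      rw [h1, tendsto_SL2]
      have hone : ((1:SL2) : Matrix (Fin 2) (Fin 2) ℝ) = 1 := by simp
      rw [hone]
      refine Tendsto.congr'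
        (Filter.eventually_atTop.2 ⟨N, fun n hn => (hmat n hn).symm⟩) ?_
      refine tendsto_pi_nhds.2 fun i => tendsto_pi_nhds.2 fun j => ?_
      fin_cases i <;> fin_cases j <;>
        simp [Matrix.one_apply] <;>
        first
          | simpa using hb1.inv₀ one_ne_zero
          | exact hp0
          | exact hb1
    have hsnd : Tendsto (fun n => (u n).2) atTop (𝓝 h.2) := by
      refine Tendsto.congr'
        (Filter.eventually_atTop.2 ⟨N, fun n hn => (hvec n hn).symm⟩) tendsto_const_nhds
    have := hfst.prodMk_nhds hsnd
    simpa using this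
lemma part2 (k : ℕ → ℕ) (hk : StrictMono k) (u : ℕ → GG)
    (hu : ∀ n, u n ∈ conjSet ((1:SL2), ![0,(k n : ℝ)]) Bset)
    (x : GG) (hx : Tendsto u atTop (𝓝 x)) : x ∈ R2set := by
  have hform : ∀ n, ∃ a s : ℝ, a ≠ 0 ∧
      ((u n).1 : Matrix (Fin 2) (Fin 2) ℝ) = !![a, s; 0, a⁻¹] ∧
      (u n).2 = ![-(s * (k n : ℝ)), (k n : ℝ) - a⁻¹ * (k n : ℝ)] := by
    intro n
    obtain ⟨b, ⟨a, s, ha, hb1, hb2⟩, hbe⟩ := hu n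
    refine ⟨a, s, ha, ?_, ?_⟩
    · rw [← hbe]; dsimp only; rw [conj_formula]; exact hb1
    · rw [← hbe]; dsimp only; rw [conj_formula]
      funext i
      fin_cases i <;>
        · simp [hb1, hb2, Matrix.mulVec, dotProduct, Fin.sum_univ_two]
          ring
  choose a s ha hmat hvec using hform
  set M := (x.1 : Matrix (Fin 2) (Fin 2) ℝ) with hM
  have hu1 : Tendsto (fun n => ((u n).1 : Matrix (Fin 2) (Fin 2) ℝ)) atTop (𝓝 M) :=
    (coe_cont.tendsto x).comp hx
  have hu2 : Tendsto (fun n => (u n).2) atTop (𝓝 x.2) :=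
    (continuous_snd.tendsto x).comp hx
  have hentry : ∀ i j, Tendsto (fun n => ((u n).1 : Matrix (Fin 2) (Fin 2) ℝ) i j)
      atTop (𝓝 (M i j)) := fun i j =>
    tendsto_pi_nhds.1 (tendsto_pi_nhds.1 hu1 i) j
  have hv : ∀ i, Tendsto (fun n => (u n).2 i) atTop (𝓝 (x.2 i)) := fun i =>
    tendsto_pi_nhds.1 hu2 i
  -- k n → ∞ and (k n)⁻¹ → 0
  have hkinf : Tendsto (fun n => ((k n : ℝ))) atTop atTop :=
    tendsto_natCast_atTop_atTop.comp hk.tendsto_atTop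
  have hkinv : Tendsto (fun n => ((k n : ℝ))⁻¹) atTop (𝓝 0) :=
    tendsto_inv_atTop_zero.comp hkinf
  have hkne : ∀ᶠ n in atTop, ((k n : ℝ)) ≠ 0 := by
    filter_upwards [Filter.eventually_atTop.2 ⟨1, fun n hn => hn⟩] with n hn
    have : 1 ≤ k n := le_trans hn (hk.le_apply)
    positivity
  -- s n * k n converges
  have hsk : Tendsto (fun n => s n * (k n : ℝ)) atTop (𝓝 (-(x.2 0))) := by
    have := (hv 0).neg
    refine this.congr fun n => ?_
    rw [hvec n]; simp
  have hs0 : Tendsto s atTop (𝓝 0) := by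
    have h2 : Tendsto (fun n => (s n * (k n : ℝ)) * ((k n : ℝ))⁻¹) atTop (𝓝 (-(x.2 0) * 0)) :=
      hsk.mul hkinv
    rw [mul_zero] at h2
    refine h2.congr' ?_
    filter_upwards [hkne] with n hn
    field_simp
  have hsM : Tendsto s atTop (𝓝 (M 0 1)) := by
    refine (hentry 0 1).congr fun n => ?_
    rw [hmat n]; simp
  have hM01 : M 0 1 = 0 := tendsto_nhds_unique hsM hs0
  -- a n ⁻¹ → 1
  have hbk : Tendsto (fun n => (1 - (a n)⁻¹) * (k n : ℝ)) atTop (𝓝 (x.2 1)) := by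
    refine (hv 1).congr fun n => ?_
    rw [hvec n]; simp; ring
  have hb1 : Tendsto (fun n => (a n)⁻¹) atTop (𝓝 1) := by
    have h2 : Tendsto (fun n => ((1 - (a n)⁻¹) * (k n : ℝ)) * ((k n : ℝ))⁻¹) atTop
        (𝓝 (x.2 1 * 0)) := hbk.mul hkinv
    rw [mul_zero] at h2
    have h3 : Tendsto (fun n => 1 - (a n)⁻¹) atTop (𝓝 0) := by
      refine h2.congr' ?_
      filter_upwards [hkne] with n hn
      field_simp
    have := tendsto_const_nhds.sub h3 (f := fun _ : ℕ => (1:ℝ))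
    simpa using this
  have hbM : Tendsto (fun n => (a n)⁻¹) atTop (𝓝 (M 1 1)) := by
    refine (hentry 1 1).congr fun n => ?_
    rw [hmat n]; simp
  have hM11 : M 1 1 = 1 := tendsto_nhds_unique hbM hb1
  have haM : Tendsto a atTop (𝓝 (M 0 0)) := by
    refine (hentry 0 0).congr fun n => ?_
    rw [hmat n]; simp
  have ha1 : Tendsto a atTop (𝓝 1) := by
    have := hb1.inv₀ one_ne_zero
    rw [inv_one] at this
    refine this.congr fun n => ?_
    exact inv_inv (a n)
  have hM00 : M 0 0 = 1 := tendsto_nhds_unique haM ha1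
  have hM10 : M 1 0 = 0 := by
    refine tendsto_nhds_unique ((hentry 1 0).congr (fun n => ?_)) tendsto_const_nhds
    rw [hmat n]; simp
  have hMone : M = 1 := by
    rw [Matrix.one_fin_two]
    ext i j
    fin_cases i <;> fin_cases j <;> simp [hM00, hM01, hM10, hM11]
  show x.1 = 1
  ext i j
  rw [hM] at hMone
  simp [hMone]
/-- With `x_n = (I,(0,n))`, the conjugates `x_n B x_n⁻¹` converge in the Chabauty sense to
the closed subgroup `ℝ² = {(I,v) : v ∈ ℝ²}`. -/
theorem stmt_19 :
    ChabautyTendsto (fun n => conjSet ((1 : SL2), ![0, (n : ℝ)]) Bset) R2set ∧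
      IsClosedSubgroup R2set := by
  refine ⟨⟨fun h hh => part1 h hh, fun k hk u hu x hx => part2 k hk u hu x hx⟩,
    R2_closed_subgroup⟩

end
end
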